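/- arXiv:1308.3272 — 2 statements merged into one kernel-verified Lean document; each statement's English description precedes it below -/
import Mathlib

section
/- For every integer K ≥ 2 and every ω ∈ (0,1), the achievable sum-DoF d(ω) of Theorem 1 strictly exceeds the ZF-TDMA baseline d_ZF-TDMA(ω) = (K−2)ω + 1, provided K ≥ 3. Moreover d(0) = d_ZF-TDMA(0) = 1 and d(1) = d_ZF-TDMA(1) = K−1. -/
theorem dof_gain_over_zf_tdma (K : ℕ) (hK : 2 ≤ K) :
    let Kr : ℝ := (K : ℝ)
    let a : ℝ := Kr * (Kr - 1) * (Kr - 2) / ((Kr - 1) * (Kr - 2) + Kr)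
    let b : ℝ := Kr * (Kr - 1) / ((Kr - 1) * (Kr - 2) + Kr)
    let d : ℝ → ℝ := fun ω =>
      if ω ≤ (Kr - 2) / (2 * (Kr - 1)) then (Kr - 1) * ω + 1
      else if ω ≤ (Kr - 1) / Kr then a * ω + b
      else Kr - 1
    (d 0 = 1) ∧ ((Kr - 2) * 0 + 1 = 1) ∧
    (d 1 = Kr - 1) ∧ ((Kr - 2) * 1 + 1 = Kr - 1) ∧
    (3 ≤ K → ∀ ω ∈ Set.Ioo (0 : ℝ) 1, (Kr - 2) * ω + 1 < d ω) := by
  intro Kr a b d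
  have hK2 : (2 : ℝ) ≤ Kr := by show (2:ℝ) ≤ (K:ℝ); exact_mod_cast hK
  have hden : (0 : ℝ) < 2 * (Kr - 1) := by nlinarith
  have hKpos : (0 : ℝ) < Kr := by linarith
  refine ⟨?_, by ring, ?_, by ring, ?_⟩
  · show (if (0:ℝ) ≤ (Kr - 2) / (2 * (Kr - 1)) then (Kr - 1) * 0 + 1
      else if (0:ℝ) ≤ (Kr - 1) / Kr then a * 0 + b else Kr - 1) = 1
    rw [if_pos (div_nonneg (by linarith) (by linarith))]
    ring
  · show (if (1:ℝ) ≤ (Kr - 2) / (2 * (Kr - 1)) then (Kr - 1) * 1 + 1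
      else if (1:ℝ) ≤ (Kr - 1) / Kr then a * 1 + b else Kr - 1) = Kr - 1
    rw [if_neg, if_neg]
    · rw [not_le, div_lt_iff₀ hKpos]; linarith
    · rw [not_le, div_lt_iff₀ hden]; linarith
  · intro hK3 ω hω
    obtain ⟨hω0, hω1⟩ := hω
    have hK3r : (3 : ℝ) ≤ Kr := by show (3:ℝ) ≤ (K:ℝ); exact_mod_cast hK3
    show (Kr - 2) * ω + 1 < if ω ≤ (Kr - 2) / (2 * (Kr - 1)) then (Kr - 1) * ω + 1
      else if ω ≤ (Kr - 1) / Kr then a * ω + b else Kr - 1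
    split_ifs with h1 h2
    · linarith
    · have hD : (0 : ℝ) < (Kr - 1) * (Kr - 2) + Kr := by nlinarith
      have hab : a * ω + b = (Kr * (Kr - 1) * (Kr - 2) * ω + Kr * (Kr - 1)) /
          ((Kr - 1) * (Kr - 2) + Kr) := by
        show Kr * (Kr - 1) * (Kr - 2) / ((Kr - 1) * (Kr - 2) + Kr) * ω +
          Kr * (Kr - 1) / ((Kr - 1) * (Kr - 2) + Kr) = _
        field_simp
      rw [hab, lt_div_iff₀ hD]
      nlinarith [sq_nonneg (Kr - 3), mul_pos hω0 (by linarith : (0:ℝ) < Kr - 2)]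
    · nlinarith
end

section
/- For K = 3, the function d*(γ) of Corollary 1 is continuous and nonincreasing on [0, ∞), equals the cut-set bound 2 exactly on [0, 1/3], and equals 3/2 for all γ ≥ 1; consequently the largest normalized delay for which the full DoF 2 is retained is γ = 1/3. -/
lemma d_eq :
    (fun γ : ℝ => if γ ≤ 1 / 3 then (2:ℝ) else if γ ≤ 1 then -(3 / 4) * γ + 9 / 4 else 3 / 2)
      = fun γ : ℝ => max (3 / 2) (min 2 (-(3 / 4) * γ + 9 / 4)) := by
  funext γ
  split_ifs with h1 h2
  · rw [min_eq_left (by linarith), max_eq_right (by norm_num)]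
  · rw [min_eq_right (by linarith), max_eq_right (by linarith)]
  · push_neg at h2
    rw [min_eq_right (by linarith), max_eq_left (by linarith)]

theorem corollary1_properties :
    let d : ℝ → ℝ := fun γ =>
      if γ ≤ 1 / 3 then 2 else if γ ≤ 1 then -(3 / 4) * γ + 9 / 4 else 3 / 2
    ContinuousOn d (Set.Ici 0) ∧
    AntitoneOn d (Set.Ici 0) ∧
    (∀ γ : ℝ, 0 ≤ γ → (d γ = 2 ↔ γ ≤ 1 / 3)) ∧
    (∀ γ : ℝ, 1 ≤ γ → d γ = 3 / 2) ∧
    IsGreatest {γ : ℝ | 0 ≤ γ ∧ d γ = 2} (1 / 3) := by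
  intro d
  have hd : d = fun γ : ℝ => max (3 / 2) (min 2 (-(3 / 4) * γ + 9 / 4)) := d_eq
  have hlin : Antitone (fun γ : ℝ => -(3 / 4) * γ + 9 / 4) := by
    intro a b h; dsimp; linarith
  refine ⟨?_, ?_, ?_, ?_, ?_⟩
  · rw [hd]
    exact (continuous_const.max (continuous_const.min (by continuity))).continuousOn
  · rw [hd]
    exact (antitone_const.max (antitone_const.min hlin)).antitoneOn _
  · intro γ hγ
    constructor
    · intro h
      by_contra hc
      push_neg at hc
      simp only [d, if_neg (not_le.mpr hc)] at h
      split_ifs at h with h2 <;> linarith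
    · intro h; simp only [d, if_pos h]
  · intro γ hγ
    simp only [d]
    split_ifs with h1 h2
    · linarith
    · linarith
    · rfl
  · constructor
    · exact ⟨by norm_num, by simp [d]⟩
    · rintro x ⟨hx0, hx2⟩
      by_contra hc
      push_neg at hc
      simp only [d, if_neg (not_le.mpr hc)] at hx2
      split_ifs at hx2 <;> linarith
end
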